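/- Let B(z) = ∏_{k=1}^{n}(z - a_k)/(1 - \bar{a_k}z) be a finite Blaschke product of degree n ≥ 1 and M a Möbius transformation of the unit disc. Then B ∘ M = B on the closed unit disc if and only if M permutes the zero set {a_1, ..., a_n} (with multiplicity) and there exists a point z₀ in the closed disc, not among the a_k, with B(M(z₀)) = B(z₀). -/

import Mathlib

open Complex

lemma normSq_key (w z : ℂ) :
    normSq (1 - (starRingEnd ℂ) w * z) - normSq (z - w) = (1 - normSq w) * (1 - normSq z) := by
  simp only [normSq_apply, Complex.sub_re, Complex.sub_im, Complex.mul_re, Complex.mul_im,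
    Complex.conj_re, Complex.conj_im, Complex.one_re, Complex.one_im]
  ring

lemma den_ne {w z : ℂ} (hw : ‖w‖ < 1) (hz : ‖z‖ ≤ 1) :
    (1 : ℂ) - (starRingEnd ℂ) w * z ≠ 0 := by
  intro h
  have h1 : ((starRingEnd ℂ) w * z) = 1 := (sub_eq_zero.mp h).symm
  have h2 : ‖(starRingEnd ℂ) w * z‖ = 1 := by rw [h1]; simp
  rw [norm_mul, Complex.norm_conj] at h2
  nlinarith [norm_nonneg z, norm_nonneg w]

lemma abs_le_den {w z : ℂ} (hw : ‖w‖ < 1) (hz : ‖z‖ ≤ 1) :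
    ‖z - w‖ ≤ ‖1 - (starRingEnd ℂ) w * z‖ := by
  have h := normSq_key w z
  have h1 : normSq w < 1 := by rw [← Complex.sq_norm]; nlinarith [norm_nonneg w]
  have h2 : normSq z ≤ 1 := by rw [← Complex.sq_norm]; nlinarith [norm_nonneg z]
  have h3 : normSq (z - w) ≤ normSq (1 - (starRingEnd ℂ) w * z) := by nlinarith
  rw [Complex.norm_def, Complex.norm_def]
  exact Real.sqrt_le_sqrt h3

lemma abs_lt_den {w z : ℂ} (hw : ‖w‖ < 1) (hz : ‖z‖ < 1) :
    ‖z - w‖ < ‖1 - (starRingEnd ℂ) w * z‖ := by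
  have h := normSq_key w z
  have h1 : normSq w < 1 := by rw [← Complex.sq_norm]; nlinarith [norm_nonneg w]
  have h2 : normSq z < 1 := by rw [← Complex.sq_norm]; nlinarith [norm_nonneg z]
  have h3 : normSq (z - w) < normSq (1 - (starRingEnd ℂ) w * z) := by nlinarith
  rw [Complex.norm_def, Complex.norm_def]
  exact Real.sqrt_lt_sqrt (normSq_nonneg _) h3

lemma Dk_ne {e α w z : ℂ} (he : ‖e‖ = 1) (hα : ‖α‖ < 1)
    (hw : ‖w‖ < 1) (hz : ‖z‖ ≤ 1) :
    (1 - (starRingEnd ℂ) α * z) - (starRingEnd ℂ) w * e * (z - α) ≠ 0 := by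
  intro h
  have h1 : (1 - (starRingEnd ℂ) α * z) = (starRingEnd ℂ) w * e * (z - α) := sub_eq_zero.mp h
  have h2 : ‖1 - (starRingEnd ℂ) α * z‖ = ‖w‖ * ‖z - α‖ := by
    rw [h1, norm_mul, norm_mul, Complex.norm_conj, he, mul_one]
  have h3 := abs_le_den hα hz
  have h4 : (0:ℝ) < ‖1 - (starRingEnd ℂ) α * z‖ :=
    norm_pos_iff.mpr (den_ne hα hz)
  nlinarith [norm_nonneg (z - α), norm_nonneg w]

lemma ec_ne {e α w : ℂ} (he : ‖e‖ = 1) (hα : ‖α‖ < 1)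
    (hw : ‖w‖ < 1) : e + w * (starRingEnd ℂ) α ≠ 0 := by
  intro h
  have h1 : e = -(w * (starRingEnd ℂ) α) := by rw [← sub_eq_zero]; rw [← h]; ring
  have h2 : ‖e‖ = ‖w‖ * ‖α‖ := by
    rw [h1, norm_neg, norm_mul, Complex.norm_conj]
  nlinarith [norm_nonneg w, norm_nonneg α]

lemma conj_e_inv {e : ℂ} (he : ‖e‖ = 1) : (starRingEnd ℂ) e = e⁻¹ := by
  have he0 : e ≠ 0 := by intro h; rw [h] at he; simp at he
  have := Complex.mul_conj e
  rw [Complex.normSq_eq_norm_sq, he] at this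
  norm_num at this
  field_simp
  linear_combination this

lemma r_lt {e α w : ℂ} (he : ‖e‖ = 1) (hα : ‖α‖ < 1)
    (hw : ‖w‖ < 1) :
    ‖(e * α + w) / (e + w * (starRingEnd ℂ) α)‖ < 1 := by
  have he0 : e ≠ 0 := by intro h; rw [h] at he; simp at he
  have hce := conj_e_inv he
  set c := (starRingEnd ℂ) e * w with hc
  have hcabs : ‖c‖ = ‖w‖ := by rw [hc, norm_mul, Complex.norm_conj, he, one_mul]
  have h1 : e * α + w = e * (α + c) := by rw [hc, hce]; field_simp
  have h2 : e + w * (starRingEnd ℂ) α = e * (1 + c * (starRingEnd ℂ) α) := by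
    rw [hc, hce]; field_simp
  have h3 : ‖α + c‖ < ‖1 + c * (starRingEnd ℂ) α‖ := by
    have := abs_lt_den (w := α) (z := -c) hα (by rw [norm_neg, hcabs]; exact hw)
    rw [show (-c - α) = -(α + c) by ring] at this
    rw [show (1 - (starRingEnd ℂ) α * -c) = 1 + c * (starRingEnd ℂ) α by ring] at this
    rwa [norm_neg] at this
  rw [h1, h2, norm_div, norm_mul, norm_mul, he, one_mul, one_mul]
  rw [div_lt_one]
  · exact h3
  · exact lt_of_le_of_lt (norm_nonneg _) h3

lemma key_factor {e α w z : ℂ} (he : ‖e‖ = 1) (hα : ‖α‖ < 1)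
    (hw : ‖w‖ < 1) (hz : ‖z‖ ≤ 1) :
    (e*(z-α)/(1 - (starRingEnd ℂ) α * z) - e*(w-α)/(1 - (starRingEnd ℂ) α * w)) /
      (1 - (starRingEnd ℂ) (e*(w-α)/(1 - (starRingEnd ℂ) α * w)) * (e*(z-α)/(1 - (starRingEnd ℂ) α * z)))
    = (e * (1 - α * (starRingEnd ℂ) w)/(1 - (starRingEnd ℂ) α * w)) * ((z-w)/(1 - (starRingEnd ℂ) w * z)) := by
  have he0 : e ≠ 0 := by intro h; rw [h] at he; simp at he
  have hce := conj_e_inv he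
  have hdz : (1 : ℂ) - (starRingEnd ℂ) α * z ≠ 0 := den_ne hα hz
  have hdw : (1 : ℂ) - (starRingEnd ℂ) α * w ≠ 0 := den_ne hα hw.le
  have hdwc : (1 : ℂ) - α * (starRingEnd ℂ) w ≠ 0 := by
    intro h
    apply hdw
    have : (starRingEnd ℂ) ((1 : ℂ) - α * (starRingEnd ℂ) w) = 0 := by rw [h]; simp
    simpa [map_sub, map_mul, map_one, Complex.conj_conj, mul_comm] using this
  have hwz : (1 : ℂ) - (starRingEnd ℂ) w * z ≠ 0 := den_ne hw hz
  have hαα : (1 : ℂ) - (starRingEnd ℂ) α * α ≠ 0 := den_ne hα hα.le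
  have hdz' : (1 : ℂ) - z * (starRingEnd ℂ) α ≠ 0 := by intro h; apply hdz; linear_combination h
  have hdw' : (1 : ℂ) - w * (starRingEnd ℂ) α ≠ 0 := by intro h; apply hdw; linear_combination h
  have hdwc' : (1 : ℂ) - (starRingEnd ℂ) w * α ≠ 0 := by intro h; apply hdwc; linear_combination h
  have hwz' : (1 : ℂ) - z * (starRingEnd ℂ) w ≠ 0 := by intro h; apply hwz; linear_combination h
  have hnum : e*(z-α)/(1 - (starRingEnd ℂ) α * z) - e*(w-α)/(1 - (starRingEnd ℂ) α * w)
      = e*(z-w)*(1 - (starRingEnd ℂ) α * α) /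
        ((1 - (starRingEnd ℂ) α * z) * (1 - (starRingEnd ℂ) α * w)) := by
    field_simp
    ring
  have hden : (1 : ℂ) - (starRingEnd ℂ) (e*(w-α)/(1 - (starRingEnd ℂ) α * w)) * (e*(z-α)/(1 - (starRingEnd ℂ) α * z))
      = (1 - (starRingEnd ℂ) α * α) * (1 - (starRingEnd ℂ) w * z) /
        ((1 - α * (starRingEnd ℂ) w) * (1 - (starRingEnd ℂ) α * z)) := by
    simp only [map_div₀, map_mul, map_sub, map_one, Complex.conj_conj, hce]
    field_simp
    ring
  rw [hnum, hden]
  field_simp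

lemma prod_ofFn_map {n : ℕ} (a : Fin n → ℂ) (f : ℂ → ℂ) :
    (Multiset.map f ↑(List.ofFn a)).prod = ∏ k, f (a k) := by
  simp [Multiset.map_coe, ← List.ofFn_eq_map, List.prod_ofFn, Function.comp]

lemma swap_prod {n : ℕ} (a : Fin n → ℂ) (M : ℂ → ℂ)
    (hperm : Multiset.map M (↑(List.ofFn a) : Multiset ℂ) = (↑(List.ofFn a) : Multiset ℂ))
    (f : ℂ → ℂ) : ∏ k, f (a k) = ∏ k, f (M (a k)) := by
  rw [← prod_ofFn_map a f, ← hperm, Multiset.map_map]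
  have := prod_ofFn_map a (f ∘ M)
  simpa using this

section
open Polynomial

lemma one_add_ne {x : ℂ} (h : ‖x‖ < 1) : (1:ℂ) + x ≠ 0 := by
  intro h0
  have h1 : x = -1 := by rw [← sub_eq_zero]; rw [← h0]; ring
  rw [h1] at h; simp at h

lemma univ_val_fin (n : ℕ) : (Finset.univ.val : Multiset (Fin n)) = ↑(List.finRange n) := by
  simp [Fin.univ_def]

theorem fwd (n : ℕ) (a : Fin n → ℂ)
    (ha : ∀ k, ‖a k‖ < 1) (B : ℂ → ℂ)
    (hB : ∀ z, B z = ∏ k, (z - a k) / (1 - (starRingEnd ℂ) (a k) * z))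
    (e α : ℂ) (he : ‖e‖ = 1) (hα : ‖α‖ < 1) (M : ℂ → ℂ)
    (hM : ∀ z, M z = e * (z - α) / (1 - (starRingEnd ℂ) α * z))
    (h : ∀ z : ℂ, ‖z‖ ≤ 1 → B (M z) = B z) :
    Multiset.map M (↑(List.ofFn a) : Multiset ℂ) = (↑(List.ofFn a) : Multiset ℂ) := by
  classical
  set cj := starRingEnd ℂ
  set r : Fin n → ℂ := fun k => (e * α + a k) / (e + a k * cj α) with hrdef
  have hc : ∀ k, e + a k * cj α ≠ 0 := fun k => ec_ne he hα (ha k)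
  have hr : ∀ k, ‖r k‖ < 1 := fun k => r_lt he hα (ha k)
  have hrk : ∀ k, (e + a k * cj α) * r k = e * α + a k := fun k => by
    rw [hrdef]; exact mul_div_cancel₀ _ (hc k)
  have hMr : ∀ k, M (r k) = a k := by
    intro k
    have hkey : e * (r k - α) = a k * (1 - cj α * r k) := by
      linear_combination hrk k
    rw [hM, hkey, mul_div_assoc, div_self (den_ne hα (hr k).le), mul_one]
  -- polynomials
  set N : ℂ[X] := ∏ k, (C (e + a k * cj α) * (X - C (r k))) with hN
  set Q : ℂ[X] := ∏ k, (C 1 - C (cj (a k)) * X) with hQ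
  set P : ℂ[X] := ∏ k, (X - C (a k)) with hP
  set D : ℂ[X] := ∏ k, (C (1 + cj (a k) * e * α) - C (cj α + cj (a k) * e) * X) with hD
  have hevalQ : ∀ z : ℂ, eval z Q = ∏ k, (1 - cj (a k) * z) := by
    intro z; rw [hQ, eval_prod]; simp
  have hevalD : ∀ z : ℂ, eval z D = ∏ k, ((1 - cj α * z) - cj (a k) * e * (z - α)) := by
    intro z; rw [hD, eval_prod]; apply Finset.prod_congr rfl; intro k _; simp; ring
  have hevalN : ∀ z : ℂ, eval z N = ∏ k, ((e + a k * cj α) * (z - r k)) := by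
    intro z; rw [hN, eval_prod]; simp
  have hevalP : ∀ z : ℂ, eval z P = ∏ k, (z - a k) := by
    intro z; rw [hP, eval_prod]; simp
  have hQz : ∀ z : ℂ, ‖z‖ ≤ 1 → eval z Q ≠ 0 := by
    intro z hz; rw [hevalQ, Finset.prod_ne_zero_iff]
    intro k _; exact den_ne (ha k) hz
  have hDz : ∀ z : ℂ, ‖z‖ ≤ 1 → eval z D ≠ 0 := by
    intro z hz; rw [hevalD, Finset.prod_ne_zero_iff]
    intro k _; exact Dk_ne he hα (ha k) hz
  -- key evaluation identity
  have heq : ∀ z : ℂ, ‖z‖ ≤ 1 → eval z (N * Q) = eval z (P * D) := by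
    intro z hz
    have hdz : (1:ℂ) - cj α * z ≠ 0 := den_ne hα hz
    have hBz : B z = eval z P / eval z Q := by
      rw [hB, hevalP, hevalQ, ← Finset.prod_div_distrib]
    have hfrac : ∀ k, (M z - a k) / (1 - cj (a k) * M z)
        = ((e + a k * cj α) * (z - r k)) / ((1 - cj α * z) - cj (a k) * e * (z - α)) := by
      intro k
      have hnum : e * (z - α) - a k * (1 - cj α * z) = (e + a k * cj α) * (z - r k) := by
        linear_combination hrk k
      have hDk := Dk_ne he hα (ha k) hz
      have hdz' : (1 : ℂ) - z * cj α ≠ 0 := by intro h; apply hdz; linear_combination h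
      have hden : 1 - cj (a k) * (e * (z - α) / (1 - cj α * z))
          = ((1 - cj α * z) - cj (a k) * e * (z - α)) / (1 - cj α * z) := by
        field_simp
      rw [hM, hden, div_sub' hdz, div_div_div_cancel_right₀ hdz, ← hnum]
      congr 1
      ring
    have hBMz : B (M z) = eval z N / eval z D := by
      rw [hB (M z), hevalN, hevalD, ← Finset.prod_div_distrib]
      exact Finset.prod_congr rfl fun k _ => hfrac k
    have h1 := h z hz
    rw [hBMz, hBz, div_eq_div_iff (hDz z hz) (hQz z hz)] at h1
    rw [eval_mul, eval_mul]
    linear_combination h1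
  -- polynomial identity
  have hNQPD : N * Q = P * D := by
    rw [← sub_eq_zero]
    apply Polynomial.eq_zero_of_infinite_isRoot
    apply Set.Infinite.mono (s := (fun (m : ℕ) => (1:ℂ)/(m+2)) '' Set.univ)
    · rintro x ⟨m, -, rfl⟩
      have habs : ‖(1:ℂ)/(m+2)‖ ≤ 1 := by
        rw [norm_div, norm_one]
        have h2 : ((1:ℝ)) ≤ ‖(m:ℂ)+2‖ := by
          have : ((m:ℂ)+2) = ((m+2 : ℕ) : ℂ) := by push_cast; ring
          rw [this, Complex.norm_natCast]
          exact_mod_cast Nat.le_add_left 1 (m+1)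
        rw [div_le_one (by linarith)]
        linarith
      simp only [Set.mem_setOf_eq, IsRoot, eval_sub]
      rw [sub_eq_zero]
      exact heq _ habs
    · apply Set.infinite_of_injective_forall_mem (f := fun (m : ℕ) => (1:ℂ)/(m+2)) ?_ ?_
      · intro x y hxy
        simp only [one_div] at hxy
        have hx : ((x:ℂ)+2) ≠ 0 := by
          intro h0
          have := congrArg Complex.re h0
          push_cast at this
          simp at this
          linarith [Nat.cast_nonneg (α := ℝ) x]
        have hy : ((y:ℂ)+2) ≠ 0 := by
          intro h0
          have := congrArg Complex.re h0
          push_cast at this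
          simp at this
          linarith [Nat.cast_nonneg (α := ℝ) y]
        have : ((x:ℂ)+2) = ((y:ℂ)+2) := by
          rw [← inv_inv ((x:ℂ)+2), hxy, inv_inv]
        have : (x:ℂ) = y := by linear_combination this
        exact_mod_cast this
      · intro m; exact Set.mem_image_of_mem _ (Set.mem_univ m)
  -- nonvanishing of polynomials
  have hN0 : N ≠ 0 := by
    rw [hN, Finset.prod_ne_zero_iff]
    intro k _
    exact mul_ne_zero (Polynomial.C_ne_zero.mpr (hc k)) (X_sub_C_ne_zero (r k))
  have hP0 : P ≠ 0 := by
    rw [hP, Finset.prod_ne_zero_iff]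
    intro k _
    exact X_sub_C_ne_zero (a k)
  have hQ0 : Q ≠ 0 := by
    intro h0
    have := congrArg (eval 0) h0
    rw [hevalQ] at this
    simp at this
  have hD0 : D ≠ 0 := by
    intro h0
    have := congrArg (eval 0) h0
    rw [hevalD] at this
    simp only [eval_zero] at this
    rw [Finset.prod_eq_zero_iff] at this
    obtain ⟨k, -, hk⟩ := this
    apply one_add_ne (x := cj (a k) * e * α) ?_
    · rw [← hk]; ring
    · rw [show cj (a k) * e * α = cj (a k) * (e * α) by ring, norm_mul]
      have : ‖cj (a k)‖ = ‖a k‖ := Complex.norm_conj _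
      rw [this, norm_mul, he, one_mul]
      nlinarith [norm_nonneg (a k), norm_nonneg α, ha k, hα]
  -- roots
  have hrootsN : N.roots = ↑(List.ofFn r) := by
    rw [hN, Polynomial.roots_prod _ _ (by rw [← hN]; exact hN0)]
    have : ∀ k : Fin n, (C (e + a k * cj α) * (X - C (r k))).roots = {r k} := by
      intro k
      rw [Polynomial.roots_C_mul _ (hc k), roots_X_sub_C]
    simp only [this]
    rw [Multiset.bind_singleton, univ_val_fin, Multiset.map_coe, ← List.ofFn_eq_map]
  have hrootsP : P.roots = ↑(List.ofFn a) := by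
    rw [hP, Polynomial.roots_prod _ _ (by rw [← hP]; exact hP0)]
    simp only [roots_X_sub_C]
    rw [Multiset.bind_singleton, univ_val_fin, Multiset.map_coe, ← List.ofFn_eq_map]
  have hQmem : ∀ x ∈ Q.roots, ¬ (‖x‖ ≤ 1) := by
    intro x hx hle
    have h0 : eval x Q = 0 := (Polynomial.mem_roots hQ0).mp hx
    rw [hevalQ, Finset.prod_eq_zero_iff] at h0
    obtain ⟨k, -, hk⟩ := h0
    exact den_ne (ha k) hle hk
  have hDmem : ∀ x ∈ D.roots, ¬ (‖x‖ ≤ 1) := by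
    intro x hx hle
    have h0 : eval x D = 0 := (Polynomial.mem_roots hD0).mp hx
    rw [hevalD, Finset.prod_eq_zero_iff] at h0
    obtain ⟨k, -, hk⟩ := h0
    exact Dk_ne he hα (ha k) hle hk
  have hfilter : (Multiset.filter (fun x => ‖x‖ ≤ 1) (N * Q).roots)
      = ↑(List.ofFn r) := by
    rw [Polynomial.roots_mul (mul_ne_zero hN0 hQ0), Multiset.filter_add, hrootsN,
      Multiset.filter_eq_self.mpr ?_, Multiset.filter_eq_nil.mpr hQmem, add_zero]
    intro x hx
    rw [Multiset.mem_coe, List.mem_ofFn] at hx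
    obtain ⟨k, rfl⟩ := hx
    exact (hr k).le
  have hfilter2 : (Multiset.filter (fun x => ‖x‖ ≤ 1) (P * D).roots)
      = ↑(List.ofFn a) := by
    rw [Polynomial.roots_mul (mul_ne_zero hP0 hD0), Multiset.filter_add, hrootsP,
      Multiset.filter_eq_self.mpr ?_, Multiset.filter_eq_nil.mpr hDmem, add_zero]
    intro x hx
    rw [Multiset.mem_coe, List.mem_ofFn] at hx
    obtain ⟨k, rfl⟩ := hx
    exact (ha k).le
  have hra : (↑(List.ofFn r) : Multiset ℂ) = ↑(List.ofFn a) := by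
    rw [← hfilter, ← hfilter2, hNQPD]
  calc Multiset.map M (↑(List.ofFn a) : Multiset ℂ)
      = Multiset.map M (↑(List.ofFn r) : Multiset ℂ) := by rw [hra]
    _ = ↑(List.ofFn (fun k => M (r k))) := by
        rw [Multiset.map_coe, List.map_ofFn]; rfl
    _ = ↑(List.ofFn a) := by
        congr 1
        exact congrArg List.ofFn (funext hMr)

end

/-- `B ∘ M = B` on the closed unit disc iff `M` permutes the zero set of `B`
(with multiplicity) and `B ∘ M` agrees with `B` at one extra point of the
closed disc which is not a zero of `B`. -/
theorem invariance_iff_permutes_zeros (n : ℕ) (hn : 1 ≤ n) (a : Fin n → ℂ)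
    (ha : ∀ k, ‖a k‖ < 1) (B : ℂ → ℂ)
    (hB : ∀ z, B z = ∏ k, (z - a k) / (1 - (starRingEnd ℂ) (a k) * z))
    (e α : ℂ) (he : ‖e‖ = 1) (hα : ‖α‖ < 1) (M : ℂ → ℂ)
    (hM : ∀ z, M z = e * (z - α) / (1 - (starRingEnd ℂ) α * z)) :
    (∀ z : ℂ, ‖z‖ ≤ 1 → B (M z) = B z) ↔
      (Multiset.map M (↑(List.ofFn a) : Multiset ℂ) = (↑(List.ofFn a) : Multiset ℂ) ∧
        ∃ z₀ : ℂ, ‖z₀‖ ≤ 1 ∧ (∀ k, z₀ ≠ a k) ∧ B (M z₀) = B z₀) := by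
  constructor
  · intro h
    refine ⟨?_, 1, by norm_num, ?_, h 1 (by norm_num)⟩
    · exact fwd n a ha B hB e α he hα M hM h
    · intro k hk
      have := ha k
      rw [← hk] at this
      simp at this
  · rintro ⟨hperm, z₀, hz₀1, hz₀2, hz₀3⟩
    have hBM : ∀ z : ℂ, ‖z‖ ≤ 1 →
        B (M z) = (∏ k, (e * (1 - α * (starRingEnd ℂ) (a k)) / (1 - (starRingEnd ℂ) α * (a k)))) * B z := by
      intro z hz
      rw [hB (M z), hB z]
      have hswap := swap_prod a M hperm (fun w => (M z - w) / (1 - (starRingEnd ℂ) w * M z))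
      rw [hswap, ← Finset.prod_mul_distrib]
      apply Finset.prod_congr rfl
      intro k _
      rw [hM z, hM (a k)]
      exact key_factor he hα (ha k) hz
    have hB0 : B z₀ ≠ 0 := by
      rw [hB z₀]
      rw [Finset.prod_ne_zero_iff]
      intro k _
      exact div_ne_zero (sub_ne_zero.mpr (hz₀2 k)) (den_ne (ha k) hz₀1)
    have hlam : (∏ k, (e * (1 - α * (starRingEnd ℂ) (a k)) / (1 - (starRingEnd ℂ) α * (a k)))) = 1 := by
      have h1 := hBM z₀ hz₀1
      rw [hz₀3] at h1
      have := mul_right_cancel₀ hB0 (h1.symm.trans (one_mul (B z₀)).symm)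
      exact this
    intro z hz
    rw [hBM z hz, hlam, one_mul]
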